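/- Let u_{km} = x_k x_{k+1} ⋯ x_m (1 ≤ k ≤ m ≤ n) over the alphabet x₁ > x₂ > … > xₙ. The nonassociative word [[u_{km}][u_{rs}]] is a standard nonassociative word only in the following cases: (1) k = m ≤ r; (2) r = k+1 and m ≥ s; (3) r = k and m < s. -/

import Mathlib

/-- Letters are natural numbers with the order `x_k > x_{k+1} > …`.  Word
order: `u < v` iff `v` is a proper prefix of `u`, or at the first differing
position the letter of `u` is smaller (i.e. its index is bigger). -/
def wltN (u v : List ℕ) : Prop :=
  (v <+: u ∧ v ≠ u) ∨
    ∃ (w : List ℕ) (a b : ℕ) (u' v' : List ℕ),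
      u = w ++ a :: u' ∧ v = w ++ b :: v' ∧ b < a

/-- A nonempty word is standard (Lyndon) if `vw > wv` for every factorization
into nonempty words. -/
def StdWordN (u : List ℕ) : Prop :=
  u ≠ [] ∧ ∀ v w : List ℕ, v ≠ [] → w ≠ [] → u = v ++ w → wltN (w ++ v) (v ++ w)

/-- The underlying (associative) word of a nonassociative word. -/
def flat : FreeMagma ℕ → List ℕ
  | FreeMagma.of a => [a]
  | FreeMagma.mul x y => flat x ++ flat y

/-- Standard nonassociative words. -/
inductive StdNA : FreeMagma ℕ → Prop
  | of (a : ℕ) : StdNA (FreeMagma.of a)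
  | mul (x y : FreeMagma ℕ) : StdNA x → StdNA y →
      StdWordN (flat x) → StdWordN (flat y) →
      wltN (flat y) (flat x) →
      (∀ x₁ x₂ : FreeMagma ℕ, x = FreeMagma.mul x₁ x₂ → ¬ wltN (flat y) (flat x₂)) →
      StdNA (FreeMagma.mul x y)

/-- The left-normed bracketing `[x_K [x_{K+1} [… x_{K+f}]…]]`; this is the
standard bracketing `[u_{km}]` of `u_{km} = x_k ⋯ x_m` when `f = m - k`. -/
def leftNorm : ℕ → ℕ → FreeMagma ℕ
  | K, 0 => FreeMagma.of K
  | K, f + 1 => FreeMagma.mul (FreeMagma.of K) (leftNorm (K + 1) f)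

lemma flat_leftNorm : ∀ (f K : ℕ), flat (leftNorm K f) = List.range' K (f + 1)
  | 0, K => rfl
  | f + 1, K => by
      show [K] ++ flat (leftNorm (K + 1) f) = _
      rw [flat_leftNorm f (K + 1), List.range'_succ]
      rfl

lemma wltN_range' {k r a b : ℕ} (ha : 0 < a) (hb : 0 < b)
    (h : wltN (List.range' r b) (List.range' k a)) : k < r ∨ (k = r ∧ a < b) := by
  rcases h with ⟨⟨t, ht⟩, hne⟩ | ⟨w, x, y, u', v', h1, h2, hxy⟩
  · -- range' k a ++ t = range' r b
    have hlen : a + t.length = b := by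
      have := congrArg List.length ht; simpa using this
    have hk : k = r := by
      have h0 : (List.range' k a ++ t)[0]'(by simp; omega) = (List.range' r b)[0]'(by simp; omega) := by
        simp [ht]
      rwa [List.getElem_append_left (by simpa using ha), List.getElem_range',
        List.getElem_range'] at h0
    right
    refine ⟨hk, ?_⟩
    rcases Nat.lt_or_ge a b with h' | h'
    · exact h'
    · exfalso
      have : a = b := by omega
      exact hne (by rw [hk, this])
  · left
    have hLb : w.length < b := by
      have := congrArg List.length h1; simp at this; omega
    have hLa : w.length < a := by
      have := congrArg List.length h2; simp at this; omega
    have hx : x = r + w.length := by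
      have e1 : (List.range' r b)[w.length]? = some (r + 1 * w.length) := by
        rw [List.getElem?_eq_getElem (by simpa using hLb), List.getElem_range']
      rw [h1, List.getElem?_append_right (le_refl _)] at e1
      simp at e1
      omega
    have hy : y = k + w.length := by
      have e1 : (List.range' k a)[w.length]? = some (k + 1 * w.length) := by
        rw [List.getElem?_eq_getElem (by simpa using hLa), List.getElem_range']
      rw [h2, List.getElem?_append_right (le_refl _)] at e1
      simp at e1
      omega
    omega

lemma wltN_of_lt {k r a b : ℕ} (ha : 0 < a) (hb : 0 < b) (h : k < r) :
    wltN (List.range' r b) (List.range' k a) := by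
  obtain ⟨a', rfl⟩ : ∃ a', a = a' + 1 := ⟨a - 1, by omega⟩
  obtain ⟨b', rfl⟩ : ∃ b', b = b' + 1 := ⟨b - 1, by omega⟩
  right
  exact ⟨[], r, k, List.range' (r + 1) b', List.range' (k + 1) a',
    by simpa using List.range'_succ (s := r) (n := b') (step := 1), by simpa using List.range'_succ (s := k) (n := a') (step := 1), h⟩

lemma wltN_of_prefix {k a b : ℕ} (_ha : 0 < a) (hab : a < b) :
    wltN (List.range' k b) (List.range' k a) := by
  left
  constructor
  · exact ⟨List.range' (k + a) (b - a), by
      have := List.range'_append (s := k) (m := a) (n := b - a) (step := 1)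
      simp only [one_mul] at this
      rw [this]
      congr 1
      omega⟩
  · intro hEq
    have := congrArg List.length hEq
    simp at this
    omega

/-- The nonassociative word `[[u_{km}][u_{rs}]]` is standard only if
`k = m ≤ r`, or `r = k+1` and `m ≥ s`, or `r = k` and `m < s`. -/
theorem stmt_9 (k m r s : ℕ) (hkm : k ≤ m) (hrs : r ≤ s)
    (h : StdNA (FreeMagma.mul (leftNorm k (m - k)) (leftNorm r (s - r)))) :
    (k = m ∧ m ≤ r) ∨ (r = k + 1 ∧ s ≤ m) ∨ (r = k ∧ m < s) := by
  cases h with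
  | mul x y _ _ _ _ hlt hmin =>
    rw [flat_leftNorm, flat_leftNorm] at hlt
    have hcmp := wltN_range' (by omega) (by omega) hlt
    rcases Nat.eq_or_lt_of_le hkm with rfl | hlt'
    · -- k = m
      rcases hcmp with h' | ⟨h1, h2⟩
      · exact Or.inl ⟨rfl, by omega⟩
      · exact Or.inr (Or.inr ⟨h1.symm, by omega⟩)
    · -- k < m
      rcases hcmp with h' | ⟨h1, h2⟩
      · -- k < r
        obtain ⟨f, hf⟩ : ∃ f, m - k = f + 1 := ⟨m - k - 1, by omega⟩
        have hmin' := hmin (FreeMagma.of k) (leftNorm (k + 1) f) (by rw [hf]; rfl)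
        rw [flat_leftNorm, flat_leftNorm] at hmin'
        rcases Nat.eq_or_lt_of_le (show k + 1 ≤ r by omega) with hr | hr
        · -- r = k + 1
          rcases le_or_gt s m with hs | hs
          · exact Or.inr (Or.inl ⟨hr.symm, hs⟩)
          · exfalso
            apply hmin'
            have : List.range' r (s - r + 1) = List.range' (k + 1) (s - r + 1) := by rw [hr]
            rw [this]
            exact wltN_of_prefix (by omega) (by omega)
        · exact absurd (wltN_of_lt (by omega) (by omega) hr) hmin'
      · exact Or.inr (Or.inr ⟨h1.symm, by omega⟩)
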